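/- Let S be a numerical semigroup with multiplicity m, conductor c, depth q = ⌈c/m⌉ and offset ρ = qm − c, and define S_j = S ∩ [jm−ρ, (j+1)m−ρ). Then for all j ≥ 1, S_1 + S_j ⊆ S_{1+j} ∪ S_{2+j}. -/
import Mathlib

theorem stmt3 (S : Set ℕ)
    (h0 : 0 ∈ S)
    (hadd : ∀ a ∈ S, ∀ b ∈ S, a + b ∈ S)
    (hfin : (Sᶜ : Set ℕ).Finite)
    (m : ℕ) (hm : m ∈ S ∧ m ≠ 0 ∧ ∀ x ∈ S, x ≠ 0 → m ≤ x)
    (c : ℕ) (hc : (∀ x, c ≤ x → x ∈ S) ∧ ∀ c', (∀ x, c' ≤ x → x ∈ S) → c ≤ c')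
    (q ρ : ℕ) (hq : q = (c + m - 1) / m) (hρ : ρ = q * m - c) :
    ∀ j : ℕ, 1 ≤ j →
    ∀ x ∈ S, ∀ y ∈ S,
      (1 * m ≤ x + ρ ∧ x + ρ < 2 * m) →
      (j * m ≤ y + ρ ∧ y + ρ < (j + 1) * m) →
      ((1 + j) * m ≤ x + y + ρ ∧ x + y + ρ < (2 + j) * m) ∨
      ((2 + j) * m ≤ x + y + ρ ∧ x + y + ρ < (3 + j) * m) := by
  intro j hj x hx y hy ⟨h1, h2⟩ ⟨h3, h4⟩
  have hm0 : m ≠ 0 := hm.2.1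
  have hqm : (c + m - 1) / m * m ≤ c + m - 1 := Nat.div_mul_le_self _ _
  have hρm : ρ < m := by subst hq; omega
  have hxm : m ≤ x := hm.2.2 x hx (by omega)
  have key1 : (1 + j) * m ≤ x + y + ρ := by nlinarith
  have key2 : x + y + ρ < (3 + j) * m := by nlinarith
  omega
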